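/- There exists a universal constant c > 0 with the following property. Let f, g : ℝ^{d_x} × ℝ^{d_y} → ℝ be twice continuously differentiable; let g be μ-strongly convex in y; let f be L₀-Lipschitz in y; let ∇f and ∇g be L₁-Lipschitz jointly in (x, y); and let ∇²_{yy} g and ∇²_{yy} f be L₂-Lipschitz. Set L̄ = max{L₀, L₁, L₂} and κ = L̄/μ. Fix x ∈ ℝ^{d_x}, and for ν ∈ (0, 1/(2κ)] let y_ν*(x) denote the unique minimizer of y ↦ ν f(x, y) + g(x, y), and set H_ν := ν ∇²_{yy} f(x, y_ν*(x)) + ∇²_{yy} g(x, y_ν*(x)). Then for each ν ∈ (0, 1/(2κ)], H_ν is invertible with operator norm ‖H_ν^{-1}‖ ≤ 2/μ, and the map ν ↦ H_ν^{-1} is (c·κ²/μ)-Lipschitz in operator norm on (0, 1/(2κ)]. -/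

import Mathlib

open scoped RealInnerProductSpace

/-- The joint variable (x, y) viewed as an element of ℝ^{dx} × ℝ^{dy} equipped with
the Euclidean (ℓ²) norm. -/
noncomputable def mk2 {dx dy : ℕ} (x : EuclideanSpace ℝ (Fin dx))
    (y : EuclideanSpace ℝ (Fin dy)) :
    WithLp 2 (EuclideanSpace ℝ (Fin dx) × EuclideanSpace ℝ (Fin dy)) :=
  (WithLp.equiv 2 _).symm (x, y)

/-- The Hessian block ∇²_{yy} f(x, y) : ℝ^{dy} →L ℝ^{dy}. -/
noncomputable def Hyy {dx dy : ℕ}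
    (f : WithLp 2 (EuclideanSpace ℝ (Fin dx) × EuclideanSpace ℝ (Fin dy)) → ℝ)
    (x : EuclideanSpace ℝ (Fin dx)) (y : EuclideanSpace ℝ (Fin dy)) :
    EuclideanSpace ℝ (Fin dy) →L[ℝ] EuclideanSpace ℝ (Fin dy) :=
  fderiv ℝ (fun y' => gradient (fun y'' => f (mk2 x y'')) y') y


section Aux

variable {E : Type*} [NormedAddCommGroup E] [InnerProductSpace ℝ E]

lemma lemA [FiniteDimensional ℝ E] (H : E →L[ℝ] E) (c : ℝ) (hc : 0 < c)
    (h : ∀ v, c * ‖v‖ ^ 2 ≤ ⟪H v, v⟫) :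
    ∃ B : E →L[ℝ] E, H.comp B = ContinuousLinearMap.id ℝ E ∧
      B.comp H = ContinuousLinearMap.id ℝ E ∧ ‖B‖ ≤ 1 / c := by
  have hlow : ∀ v, c * ‖v‖ ≤ ‖H v‖ := by
    intro v
    rcases eq_or_ne v 0 with rfl | hv
    · simp
    · have h1 : c * ‖v‖ ^ 2 ≤ ‖H v‖ * ‖v‖ := (h v).trans (real_inner_le_norm _ _)
      have hv' : 0 < ‖v‖ := norm_pos_iff.2 hv
      nlinarith
  have hinj : Function.Injective H.toLinearMap := by
    rw [← LinearMap.ker_eq_bot, LinearMap.ker_eq_bot']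
    intro v hv
    have h1 := hlow v
    rw [show H.toLinearMap v = H v from rfl] at hv
    rw [hv] at h1
    simp only [norm_zero] at h1
    have : ‖v‖ = 0 := le_antisymm (by nlinarith) (norm_nonneg v)
    simpa using this
  have hbij : Function.Bijective H.toLinearMap :=
    ⟨hinj, (LinearMap.injective_iff_surjective).1 hinj⟩
  let e := LinearEquiv.ofBijective H.toLinearMap hbij
  let ec := e.toContinuousLinearEquiv
  refine ⟨ec.symm.toContinuousLinearMap, ?_, ?_, ?_⟩
  · ext w
    have : H (ec.symm w) = ec (ec.symm w) := rfl
    simp [this]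
  · ext w
    have : H w = ec w := rfl
    simp [this]
  · refine ContinuousLinearMap.opNorm_le_bound _ (by positivity) fun w => ?_
    have h1 : c * ‖ec.symm w‖ ≤ ‖H (ec.symm w)‖ := hlow _
    have h2 : H (ec.symm w) = w := by
      have : H (ec.symm w) = ec (ec.symm w) := rfl
      simp [this]
    rw [h2] at h1
    have h3 : ‖ec.symm.toContinuousLinearMap w‖ = ‖ec.symm w‖ := rfl
    rw [h3, div_mul_eq_mul_div, le_div_iff₀ hc, one_mul, mul_comm]
    exact h1

lemma lemB (γ : E → E) (y : E) (D : E →L[ℝ] E) (hD : HasFDerivAt γ D y) (m : ℝ)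
    (hmono : ∀ z, m * ‖z - y‖ ^ 2 ≤ ⟪γ z - γ y, z - y⟫) :
    ∀ v, m * ‖v‖ ^ 2 ≤ ⟪D v, v⟫ := by
  intro v
  have hline : HasDerivAt (fun t : ℝ => γ (y + t • v)) (D v) 0 := by
    have h1 : HasDerivAt (fun t : ℝ => y + t • v) v 0 := by
      simpa using ((hasDerivAt_id (0:ℝ)).smul_const v).const_add y
    have h2 : HasFDerivAt γ D (y + (0:ℝ) • v) := by simpa using hD
    exact h2.comp_hasDerivAt (0:ℝ) h1
  have hslope := hasDerivAt_iff_tendsto_slope.1 hline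
  have hslope2 : Filter.Tendsto (slope (fun t : ℝ => γ (y + t • v)) 0)
      (nhdsWithin 0 (Set.Ioi 0)) (nhds (D v)) :=
    hslope.mono_left (nhdsWithin_mono 0 (fun t ht => ne_of_gt ht))
  have hslope' : Filter.Tendsto (fun t : ℝ => ⟪slope (fun t : ℝ => γ (y + t • v)) 0 t, v⟫)
      (nhdsWithin 0 (Set.Ioi 0)) (nhds ⟪D v, v⟫) :=
    hslope2.inner tendsto_const_nhds
  refine ge_of_tendsto hslope' ?_
  filter_upwards [self_mem_nhdsWithin] with t (ht : (0:ℝ) < t)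
  have key := hmono (y + t • v)
  have hz : y + t • v - y = t • v := by abel
  rw [hz] at key
  have hn : ‖t • v‖ ^ 2 = t ^ 2 * ‖v‖ ^ 2 := by
    rw [norm_smul, Real.norm_eq_abs, mul_pow, sq_abs]
  rw [hn, real_inner_smul_right] at key
  have hs : slope (fun t : ℝ => γ (y + t • v)) 0 t = t⁻¹ • (γ (y + t • v) - γ y) := by
    rw [slope_def_module]; simp
  rw [hs, real_inner_smul_left, inv_mul_eq_div, le_div_iff₀ ht]
  nlinarith
end Aux

section J
variable (dx dy : ℕ)

noncomputable def Jmap : EuclideanSpace ℝ (Fin dy) →L[ℝ]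
    WithLp 2 (EuclideanSpace ℝ (Fin dx) × EuclideanSpace ℝ (Fin dy)) :=
  ((WithLp.prodContinuousLinearEquiv 2 ℝ (EuclideanSpace ℝ (Fin dx))
      (EuclideanSpace ℝ (Fin dy))).symm.toContinuousLinearMap).comp
    (ContinuousLinearMap.inr ℝ _ _)

variable {dx dy}

lemma Jmap_apply (v : EuclideanSpace ℝ (Fin dy)) :
    Jmap dx dy v = (WithLp.equiv 2 _).symm (0, v) := rfl

lemma mk2_eq (x : EuclideanSpace ℝ (Fin dx)) (y : EuclideanSpace ℝ (Fin dy)) :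
    mk2 x y = mk2 x 0 + Jmap dx dy y := by
  rw [mk2, mk2, Jmap_apply, WithLp.equiv_symm_apply, ← WithLp.toLp_add, Prod.mk_add_mk, add_zero, zero_add]

lemma norm_Jmap (v : EuclideanSpace ℝ (Fin dy)) : ‖Jmap dx dy v‖ = ‖v‖ := by
  rw [Jmap_apply, WithLp.equiv_symm_apply, WithLp.norm_toLp_snd]

lemma mk2_sub (x : EuclideanSpace ℝ (Fin dx)) (y y' : EuclideanSpace ℝ (Fin dy)) :
    mk2 x y - mk2 x y' = Jmap dx dy (y - y') := by
  rw [mk2, mk2, Jmap_apply, WithLp.equiv_symm_apply, ← WithLp.toLp_sub, Prod.mk_sub_mk, sub_self]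

lemma norm_mk2_sub (x : EuclideanSpace ℝ (Fin dx)) (y y' : EuclideanSpace ℝ (Fin dy)) :
    ‖mk2 x y - mk2 x y'‖ = ‖y - y'‖ := by rw [mk2_sub, norm_Jmap]

lemma norm_Jadj (w : WithLp 2 (EuclideanSpace ℝ (Fin dx) × EuclideanSpace ℝ (Fin dy))) :
    ‖(Jmap dx dy).adjoint w‖ ≤ ‖w‖ := by
  have h1 : ‖(Jmap dx dy).adjoint‖ = ‖Jmap dx dy‖ :=
    ContinuousLinearMap.adjoint.norm_map (Jmap dx dy)
  have h2 : ‖Jmap dx dy‖ ≤ 1 :=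
    ContinuousLinearMap.opNorm_le_bound _ zero_le_one fun v => by rw [norm_Jmap, one_mul]
  calc ‖(Jmap dx dy).adjoint w‖ ≤ ‖(Jmap dx dy).adjoint‖ * ‖w‖ :=
        (Jmap dx dy).adjoint.le_opNorm w
    _ ≤ 1 * ‖w‖ := by rw [h1]; exact mul_le_mul_of_nonneg_right h2 (norm_nonneg w)
    _ = ‖w‖ := one_mul _
end J

section Grad
variable {dx dy : ℕ} (x : EuclideanSpace ℝ (Fin dx)) (y : EuclideanSpace ℝ (Fin dy))
  (f : WithLp 2 (EuclideanSpace ℝ (Fin dx) × EuclideanSpace ℝ (Fin dy)) → ℝ)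

lemma hasFDerivAt_mk2 : HasFDerivAt (fun y' => mk2 x y') (Jmap dx dy) y := by
  have h : (fun y' : EuclideanSpace ℝ (Fin dy) => mk2 x y')
      = fun y' => mk2 x 0 + Jmap dx dy y' := funext (mk2_eq x)
  rw [h]
  exact ((Jmap dx dy).hasFDerivAt).const_add _

lemma hasGradientAt_comp (hf : DifferentiableAt ℝ f (mk2 x y)) :
    HasGradientAt (fun y' => f (mk2 x y'))
      ((Jmap dx dy).adjoint (gradient f (mk2 x y))) y := by
  have hfd : HasFDerivAt f ((InnerProductSpace.toDual ℝ _) (gradient f (mk2 x y)))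
      (mk2 x y) := hf.hasGradientAt
  have hcomp := hfd.comp y (hasFDerivAt_mk2 x y)
  have heq : ((InnerProductSpace.toDual ℝ _) (gradient f (mk2 x y))).comp (Jmap dx dy)
      = (InnerProductSpace.toDual ℝ _) ((Jmap dx dy).adjoint (gradient f (mk2 x y))) := by
    ext v
    simp only [ContinuousLinearMap.coe_comp', Function.comp_apply,
      InnerProductSpace.toDual_apply_apply, ContinuousLinearMap.adjoint_inner_left]
  rw [heq] at hcomp
  exact hcomp

lemma gradient_comp (hf : DifferentiableAt ℝ f (mk2 x y)) :
    gradient (fun y' => f (mk2 x y')) y = (Jmap dx dy).adjoint (gradient f (mk2 x y)) :=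
  (hasGradientAt_comp x y f hf).gradient

end Grad

section Gamma
variable {dx dy : ℕ} (x : EuclideanSpace ℝ (Fin dx))
  {f : WithLp 2 (EuclideanSpace ℝ (Fin dx) × EuclideanSpace ℝ (Fin dy)) → ℝ}

lemma gamma_lipschitz (hf : Differentiable ℝ f) {L : ℝ}
    (hL : ∀ p q, ‖gradient f p - gradient f q‖ ≤ L * ‖p - q‖)
    (y y' : EuclideanSpace ℝ (Fin dy)) :
    ‖gradient (fun y'' => f (mk2 x y'')) y - gradient (fun y'' => f (mk2 x y'')) y'‖
      ≤ L * ‖y - y'‖ := by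
  rw [gradient_comp x y f (hf _), gradient_comp x y' f (hf _), ← map_sub]
  calc ‖(Jmap dx dy).adjoint (gradient f (mk2 x y) - gradient f (mk2 x y'))‖
      ≤ ‖gradient f (mk2 x y) - gradient f (mk2 x y')‖ := norm_Jadj _
    _ ≤ L * ‖mk2 x y - mk2 x y'‖ := hL _ _
    _ = L * ‖y - y'‖ := by rw [norm_mk2_sub]

lemma contDiff_comp_mk2 (hf : ContDiff ℝ 2 f) :
    ContDiff ℝ 2 (fun y' : EuclideanSpace ℝ (Fin dy) => f (mk2 x y')) := by
  have h : (fun y' : EuclideanSpace ℝ (Fin dy) => mk2 x y')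
      = fun y' => mk2 x 0 + Jmap dx dy y' := funext (mk2_eq x)
  have h2 : (fun y' : EuclideanSpace ℝ (Fin dy) => f (mk2 x y'))
      = f ∘ (fun y' => mk2 x 0 + Jmap dx dy y') := by
    funext y'; rw [Function.comp_apply, ← mk2_eq]
  rw [h2]
  exact hf.comp (contDiff_const.add (Jmap dx dy).contDiff)

lemma hasFDerivAt_gamma (hf : ContDiff ℝ 2 f)
    (y : EuclideanSpace ℝ (Fin dy)) :
    HasFDerivAt (fun y' => gradient (fun y'' => f (mk2 x y'')) y') (Hyy f x y) y := by
  have hG : ContDiff ℝ 2 (fun y' : EuclideanSpace ℝ (Fin dy) => f (mk2 x y')) :=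
    contDiff_comp_mk2 x hf
  have hG' : ContDiff ℝ ((1:ℕ) + 1) (fun y' : EuclideanSpace ℝ (Fin dy) => f (mk2 x y')) := by
    norm_num
    exact hG
  have hfd : ContDiff ℝ 1 (fun y' => fderiv ℝ (fun y'' : EuclideanSpace ℝ (Fin dy)
      => f (mk2 x y'')) y') := (contDiff_succ_iff_fderiv.1 hG').2.2
  have hdiff : Differentiable ℝ (fun y' => gradient (fun y'' : EuclideanSpace ℝ (Fin dy)
      => f (mk2 x y'')) y') := by
    have : (fun y' => gradient (fun y'' : EuclideanSpace ℝ (Fin dy) => f (mk2 x y'')) y')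
        = fun y' => (InnerProductSpace.toDual ℝ _).symm
            (fderiv ℝ (fun y'' : EuclideanSpace ℝ (Fin dy) => f (mk2 x y'')) y') := rfl
    rw [this]
    exact (InnerProductSpace.toDual ℝ _).symm.toContinuousLinearEquiv.differentiable.comp
      (hfd.differentiable one_ne_zero)
  exact (hdiff y).hasFDerivAt

lemma norm_Hyy_le (hf : ContDiff ℝ 2 f) {L : ℝ} (hL0 : 0 ≤ L)
    (hL : ∀ p q, ‖gradient f p - gradient f q‖ ≤ L * ‖p - q‖)
    (y : EuclideanSpace ℝ (Fin dy)) : ‖Hyy f x y‖ ≤ L := by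
  have : Hyy f x y = fderiv ℝ (fun y' => gradient (fun y'' => f (mk2 x y'')) y') y := rfl
  rw [this]
  refine norm_fderiv_le_of_lip' ℝ hL0 (Filter.Eventually.of_forall fun z => ?_)
  exact gamma_lipschitz x (hf.differentiable (by norm_num)) hL z y

lemma norm_gradient_comp_le {L : ℝ} (hL0 : 0 ≤ L)
    (hlip : ∀ y₁ y₂ : EuclideanSpace ℝ (Fin dy), |f (mk2 x y₁) - f (mk2 x y₂)| ≤ L * ‖y₁ - y₂‖)
    (y : EuclideanSpace ℝ (Fin dy)) :
    ‖gradient (fun y' => f (mk2 x y')) y‖ ≤ L := by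
  have h1 : ‖gradient (fun y' => f (mk2 x y')) y‖
      = ‖fderiv ℝ (fun y' => f (mk2 x y')) y‖ := by
    rw [show gradient (fun y' => f (mk2 x y')) y = (InnerProductSpace.toDual ℝ _).symm
      (fderiv ℝ (fun y' => f (mk2 x y')) y) from rfl, LinearIsometryEquiv.norm_map]
  rw [h1]
  refine norm_fderiv_le_of_lip' ℝ hL0 (Filter.Eventually.of_forall fun z => ?_)
  simpa [Real.norm_eq_abs] using hlip z y

end Gamma

section FO
variable {dx dy : ℕ} (x : EuclideanSpace ℝ (Fin dx))
  {f g : WithLp 2 (EuclideanSpace ℝ (Fin dx) × EuclideanSpace ℝ (Fin dy)) → ℝ}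

lemma mono_g {μ : ℝ}
    (hsc : ∀ (x : EuclideanSpace ℝ (Fin dx)) (y₁ y₂ : EuclideanSpace ℝ (Fin dy)),
      g (mk2 x y₂) ≥ g (mk2 x y₁)
        + ⟪gradient (fun y => g (mk2 x y)) y₁, y₂ - y₁⟫ + μ / 2 * ‖y₁ - y₂‖ ^ 2)
    (y₁ y₂ : EuclideanSpace ℝ (Fin dy)) :
    μ * ‖y₁ - y₂‖ ^ 2 ≤ ⟪gradient (fun y => g (mk2 x y)) y₁
      - gradient (fun y => g (mk2 x y)) y₂, y₁ - y₂⟫ := by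
  have h1 := hsc x y₁ y₂
  have h2 := hsc x y₂ y₁
  have e1 : ⟪gradient (fun y => g (mk2 x y)) y₁, y₂ - y₁⟫
      = -⟪gradient (fun y => g (mk2 x y)) y₁, y₁ - y₂⟫ := by
    rw [show y₂ - y₁ = -(y₁ - y₂) by abel, inner_neg_right]
  have e2 : ⟪gradient (fun y => g (mk2 x y)) y₁ - gradient (fun y => g (mk2 x y)) y₂, y₁ - y₂⟫
      = ⟪gradient (fun y => g (mk2 x y)) y₁, y₁ - y₂⟫
        - ⟪gradient (fun y => g (mk2 x y)) y₂, y₁ - y₂⟫ := inner_sub_left _ _ _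
  have e3 : ‖y₂ - y₁‖ = ‖y₁ - y₂‖ := norm_sub_rev _ _
  rw [e3] at h2
  rw [e1] at h1
  linarith [h1, h2, e2]

lemma combo_hasFDerivAt (hf : ContDiff ℝ 2 f) (hg : ContDiff ℝ 2 g) (ν : ℝ)
    (y : EuclideanSpace ℝ (Fin dy)) :
    HasFDerivAt (fun y' => ν * f (mk2 x y') + g (mk2 x y'))
      ((InnerProductSpace.toDual ℝ _) (ν • gradient (fun y' => f (mk2 x y')) y
        + gradient (fun y' => g (mk2 x y')) y)) y := by
  have hdf : DifferentiableAt ℝ (fun y' => f (mk2 x y')) y :=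
    ((contDiff_comp_mk2 x hf).differentiable (by norm_num)) y
  have hdg : DifferentiableAt ℝ (fun y' => g (mk2 x y')) y :=
    ((contDiff_comp_mk2 x hg).differentiable (by norm_num)) y
  have hF : HasFDerivAt (fun y' => f (mk2 x y'))
      ((InnerProductSpace.toDual ℝ _) (gradient (fun y' => f (mk2 x y')) y)) y :=
    hdf.hasGradientAt
  have hG : HasFDerivAt (fun y' => g (mk2 x y'))
      ((InnerProductSpace.toDual ℝ _) (gradient (fun y' => g (mk2 x y')) y)) y :=
    hdg.hasGradientAt
  have h := (hF.const_mul ν).add hG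
  have heq : (InnerProductSpace.toDual ℝ _) (ν • gradient (fun y' => f (mk2 x y')) y
        + gradient (fun y' => g (mk2 x y')) y)
      = ν • (InnerProductSpace.toDual ℝ _) (gradient (fun y' => f (mk2 x y')) y)
        + (InnerProductSpace.toDual ℝ _) (gradient (fun y' => g (mk2 x y')) y) := by
    rw [map_add, map_smul]
  rw [heq]
  exact h

lemma first_order (hf : ContDiff ℝ 2 f) (hg : ContDiff ℝ 2 g) (ν : ℝ)
    (ys : EuclideanSpace ℝ (Fin dy))
    (hmin : ∀ y, ν * f (mk2 x ys) + g (mk2 x ys) ≤ ν * f (mk2 x y) + g (mk2 x y)) :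
    ν • gradient (fun y' => f (mk2 x y')) ys + gradient (fun y' => g (mk2 x y')) ys = 0 := by
  have hloc : IsLocalMin (fun y' => ν * f (mk2 x y') + g (mk2 x y')) ys :=
    Filter.Eventually.of_forall hmin
  have h0 := hloc.hasFDerivAt_eq_zero (combo_hasFDerivAt x hf hg ν ys)
  have := (InnerProductSpace.toDual ℝ (EuclideanSpace ℝ (Fin dy))).injective
    (a₁ := ν • gradient (fun y' => f (mk2 x y')) ys + gradient (fun y' => g (mk2 x y')) ys)
    (a₂ := 0) (by rw [h0, map_zero])
  exact this
end FO

set_option maxHeartbeats 1000000 in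
/-- H_ν = ν ∇²_{yy} f(x, y_ν*(x)) + ∇²_{yy} g(x, y_ν*(x)) is invertible
with ‖H_ν^{-1}‖ ≤ 2/μ, and ν ↦ H_ν^{-1} is (cκ²/μ)-Lipschitz on (0, 1/(2κ)]. -/
theorem stmt_11 :
    ∃ c : ℝ, 0 < c ∧
      ∀ (dx dy : ℕ) (μ L₀ L₁ L₂ : ℝ), 0 < μ → 0 < L₀ → 0 < L₁ → 0 < L₂ →
      ∀ (f g : WithLp 2 (EuclideanSpace ℝ (Fin dx) × EuclideanSpace ℝ (Fin dy)) → ℝ),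
        ContDiff ℝ 2 f → ContDiff ℝ 2 g →
        (∀ x y₁ y₂, g (mk2 x y₂) ≥ g (mk2 x y₁)
            + ⟪gradient (fun y => g (mk2 x y)) y₁, y₂ - y₁⟫ + μ / 2 * ‖y₁ - y₂‖ ^ 2) →
        (∀ x y₁ y₂, |f (mk2 x y₁) - f (mk2 x y₂)| ≤ L₀ * ‖y₁ - y₂‖) →
        (∀ p q, ‖gradient f p - gradient f q‖ ≤ L₁ * ‖p - q‖) →
        (∀ p q, ‖gradient g p - gradient g q‖ ≤ L₁ * ‖p - q‖) →
        (∀ x y x' y', ‖Hyy g x y - Hyy g x' y'‖ ≤ L₂ * ‖mk2 x y - mk2 x' y'‖) →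
        (∀ x y x' y', ‖Hyy f x y - Hyy f x' y'‖ ≤ L₂ * ‖mk2 x y - mk2 x' y'‖) →
        ∀ Lbar κ : ℝ, Lbar = max L₀ (max L₁ L₂) → κ = Lbar / μ →
        ∀ (x : EuclideanSpace ℝ (Fin dx)) (ystar : ℝ → EuclideanSpace ℝ (Fin dy)),
          (∀ ν ∈ Set.Ioc (0 : ℝ) (1 / (2 * κ)), ∀ y,
            ν * f (mk2 x (ystar ν)) + g (mk2 x (ystar ν))
              ≤ ν * f (mk2 x y) + g (mk2 x y)) →
          ∃ Hinv : ℝ → (EuclideanSpace ℝ (Fin dy) →L[ℝ] EuclideanSpace ℝ (Fin dy)),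
            (∀ ν ∈ Set.Ioc (0 : ℝ) (1 / (2 * κ)),
              (ν • Hyy f x (ystar ν) + Hyy g x (ystar ν)).comp (Hinv ν)
                  = ContinuousLinearMap.id ℝ _ ∧
                (Hinv ν).comp (ν • Hyy f x (ystar ν) + Hyy g x (ystar ν))
                  = ContinuousLinearMap.id ℝ _ ∧
                ‖Hinv ν‖ ≤ 2 / μ) ∧
            (∀ ν₁ ∈ Set.Ioc (0 : ℝ) (1 / (2 * κ)), ∀ ν₂ ∈ Set.Ioc (0 : ℝ) (1 / (2 * κ)),
              ‖Hinv ν₁ - Hinv ν₂‖ ≤ c * κ ^ 2 / μ * |ν₁ - ν₂|) := by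
  refine ⟨16, by norm_num, ?_⟩
  intro dx dy μ L₀ L₁ L₂ hμ hL₀ hL₁ hL₂ f g hf hg hsc hflip hgf hgg hHg hHf
    Lbar κ hLbar hκ x ystar hmin
  have hLbar_pos : 0 < Lbar := lt_of_lt_of_le hL₀ (by rw [hLbar]; exact le_max_left _ _)
  have hκpos : 0 < κ := by rw [hκ]; positivity
  rcases Nat.eq_zero_or_pos dy with hdy | hdy
  · subst hdy
    refine ⟨fun _ => 0, fun ν _ => ⟨Subsingleton.elim _ _, Subsingleton.elim _ _, ?_⟩,
      fun ν₁ _ ν₂ _ => ?_⟩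
    · rw [norm_zero]; positivity
    · rw [sub_zero, norm_zero]; positivity
  · -- main case
    have hLf : L₁ ≤ Lbar := by rw [hLbar]; exact le_trans (le_max_left L₁ L₂) (le_max_right _ _)
    have hL0bar : L₀ ≤ Lbar := by rw [hLbar]; exact le_max_left _ _
    have hL2bar : L₂ ≤ Lbar := by rw [hLbar]; exact le_trans (le_max_right L₁ L₂) (le_max_right _ _)
    have hμκ : Lbar = κ * μ := by rw [hκ]; field_simp
    have hdiff_f : Differentiable ℝ f := hf.differentiable (by norm_num)
    have hdiff_g : Differentiable ℝ g := hg.differentiable (by norm_num)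
    have hγf_lip := gamma_lipschitz x hdiff_f hgf
    have hγg_lip := gamma_lipschitz x hdiff_g hgg
    have hγf_bd : ∀ y, ‖gradient (fun y' => f (mk2 x y')) y‖ ≤ L₀ :=
      fun y => norm_gradient_comp_le x hL₀.le (hflip x) y
    have hγg_mono := mono_g x hsc
    -- κ ≥ 1
    have hκ1 : 1 ≤ κ := by
      set v : EuclideanSpace ℝ (Fin dy) := EuclideanSpace.single (⟨0, hdy⟩ : Fin dy) (1:ℝ)
      have hv : ‖v‖ = 1 := by simp [v, EuclideanSpace.norm_single]
      have h1 := hγg_mono v 0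
      have h2 : ⟪gradient (fun y => g (mk2 x y)) v - gradient (fun y => g (mk2 x y)) 0, v - 0⟫
          ≤ L₁ := by
        calc ⟪gradient (fun y => g (mk2 x y)) v - gradient (fun y => g (mk2 x y)) 0, v - 0⟫
            ≤ ‖gradient (fun y => g (mk2 x y)) v - gradient (fun y => g (mk2 x y)) 0‖ * ‖v - 0‖ :=
              real_inner_le_norm _ _
          _ ≤ (L₁ * ‖v - 0‖) * ‖v - 0‖ :=
              mul_le_mul_of_nonneg_right (hγg_lip v 0) (norm_nonneg _)
          _ = L₁ := by rw [sub_zero, hv]; ring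
      have h3 : ‖v - (0 : EuclideanSpace ℝ (Fin dy))‖ = 1 := by rw [sub_zero, hv]
      rw [h3] at h1
      have hμL : μ ≤ L₁ := by nlinarith
      rw [hκ, le_div_iff₀ hμ, one_mul]
      linarith [hLf]
    -- Hessian facts
    have hHg_coer : ∀ y v, μ * ‖v‖ ^ 2 ≤ ⟪Hyy g x y v, v⟫ := fun y =>
      lemB _ y _ (hasFDerivAt_gamma x hg y) μ (fun z => hγg_mono z y)
    have hHf_bd : ∀ y, ‖Hyy f x y‖ ≤ L₁ := norm_Hyy_le x hf hL₁.le hgf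
    -- small-ν facts
    have hνfacts : ∀ ν ∈ Set.Ioc (0:ℝ) (1/(2*κ)), ν * L₁ ≤ μ/2 ∧ ν ≤ 1/2 := by
      intro ν hν
      have hhalf : 1/(2*κ) = μ/(2*Lbar) := by rw [hκ]; field_simp
      have h2 : ν * (2*Lbar) ≤ μ := by
        have := hν.2
        rw [hhalf, le_div_iff₀ (by positivity)] at this
        linarith
      constructor
      · nlinarith [mul_le_mul_of_nonneg_left hLf hν.1.le]
      · have h3 : ν * (2*κ) ≤ 1 := by
          have := hν.2
          rw [le_div_iff₀ (by positivity)] at this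
          linarith
        nlinarith [hν.1.le]
    -- coercivity of Hν
    have hcoer : ∀ ν ∈ Set.Ioc (0:ℝ) (1/(2*κ)), ∀ v,
        μ/2 * ‖v‖ ^ 2 ≤ ⟪(ν • Hyy f x (ystar ν) + Hyy g x (ystar ν)) v, v⟫ := by
      intro ν hν v
      have h1 := hHg_coer (ystar ν) v
      have h2 : |⟪Hyy f x (ystar ν) v, v⟫| ≤ L₁ * ‖v‖ ^ 2 := by
        calc |⟪Hyy f x (ystar ν) v, v⟫| ≤ ‖Hyy f x (ystar ν) v‖ * ‖v‖ :=
              abs_real_inner_le_norm _ _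
          _ ≤ (L₁ * ‖v‖) * ‖v‖ := by
              refine mul_le_mul_of_nonneg_right ?_ (norm_nonneg _)
              calc ‖Hyy f x (ystar ν) v‖ ≤ ‖Hyy f x (ystar ν)‖ * ‖v‖ :=
                    (Hyy f x (ystar ν)).le_opNorm v
                _ ≤ L₁ * ‖v‖ := mul_le_mul_of_nonneg_right (hHf_bd _) (norm_nonneg _)
          _ = L₁ * ‖v‖ ^ 2 := by ring
      have h3 : ⟪(ν • Hyy f x (ystar ν) + Hyy g x (ystar ν)) v, v⟫
          = ν * ⟪Hyy f x (ystar ν) v, v⟫ + ⟪Hyy g x (ystar ν) v, v⟫ := by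
        rw [ContinuousLinearMap.add_apply, ContinuousLinearMap.smul_apply, inner_add_left,
          real_inner_smul_left]
      rw [h3]
      have h4 := (hνfacts ν hν).1
      have h5 := abs_le.1 h2
      nlinarith [hν.1.le, sq_nonneg ‖v‖, mul_le_mul_of_nonneg_left h5.1 hν.1.le]
    -- existence of inverse for each ν in range
    have hexists : ∀ ν ∈ Set.Ioc (0:ℝ) (1/(2*κ)),
        ∃ B : EuclideanSpace ℝ (Fin dy) →L[ℝ] EuclideanSpace ℝ (Fin dy),
          (ν • Hyy f x (ystar ν) + Hyy g x (ystar ν)).comp B = ContinuousLinearMap.id ℝ _ ∧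
          B.comp (ν • Hyy f x (ystar ν) + Hyy g x (ystar ν)) = ContinuousLinearMap.id ℝ _ ∧
          ‖B‖ ≤ 2/μ := by
      intro ν hν
      obtain ⟨B, h1, h2, h3⟩ := lemA (ν • Hyy f x (ystar ν) + Hyy g x (ystar ν)) (μ/2)
        (half_pos hμ) (hcoer ν hν)
      exact ⟨B, h1, h2, by rwa [one_div_div] at h3⟩
    have hchoice : ∀ ν : ℝ, ∃ B : EuclideanSpace ℝ (Fin dy) →L[ℝ] EuclideanSpace ℝ (Fin dy),
        ν ∈ Set.Ioc (0:ℝ) (1/(2*κ)) →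
          ((ν • Hyy f x (ystar ν) + Hyy g x (ystar ν)).comp B = ContinuousLinearMap.id ℝ _ ∧
          B.comp (ν • Hyy f x (ystar ν) + Hyy g x (ystar ν)) = ContinuousLinearMap.id ℝ _ ∧
          ‖B‖ ≤ 2/μ) := by
      intro ν
      by_cases h : ν ∈ Set.Ioc (0:ℝ) (1/(2*κ))
      · obtain ⟨B, hB⟩ := hexists ν h
        exact ⟨B, fun _ => hB⟩
      · exact ⟨0, fun hc => absurd hc h⟩
    refine ⟨fun ν => (hchoice ν).choose, fun ν hν => (hchoice ν).choose_spec hν, ?_⟩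
    -- Lipschitz part
    intro ν₁ hν₁ ν₂ hν₂
    obtain ⟨hc1a, hc1b, hc1n⟩ := (hchoice ν₁).choose_spec hν₁
    obtain ⟨hc2a, hc2b, hc2n⟩ := (hchoice ν₂).choose_spec hν₂
    -- first-order conditions
    have hFO : ∀ ν ∈ Set.Ioc (0:ℝ) (1/(2*κ)),
        ν • gradient (fun y' => f (mk2 x y')) (ystar ν)
          + gradient (fun y' => g (mk2 x y')) (ystar ν) = 0 :=
      fun ν hν => first_order x hf hg ν (ystar ν) (hmin ν hν)
    -- distance between minimizers
    have hyd : μ * ‖ystar ν₁ - ystar ν₂‖ ≤ 2 * L₀ * |ν₁ - ν₂| := by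
      set y₁ := ystar ν₁
      set y₂ := ystar ν₂
      set d := y₁ - y₂ with hd
      set A₁ := ⟪gradient (fun y' => f (mk2 x y')) y₁, d⟫ with hA₁
      set A₂ := ⟪gradient (fun y' => f (mk2 x y')) y₂, d⟫ with hA₂
      set G₁ := ⟪gradient (fun y' => g (mk2 x y')) y₁, d⟫ with hG₁
      set G₂ := ⟪gradient (fun y' => g (mk2 x y')) y₂, d⟫ with hG₂
      have s1 : ν₁ * A₁ + G₁ = 0 := by
        have h0 : ⟪ν₁ • gradient (fun y' => f (mk2 x y')) y₁
            + gradient (fun y' => g (mk2 x y')) y₁, d⟫ = ⟪(0 : EuclideanSpace ℝ (Fin dy)), d⟫ := by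
          rw [hFO ν₁ hν₁]
        rwa [inner_add_left, real_inner_smul_left, inner_zero_left] at h0
      have s2 : ν₂ * A₂ + G₂ = 0 := by
        have h0 : ⟪ν₂ • gradient (fun y' => f (mk2 x y')) y₂
            + gradient (fun y' => g (mk2 x y')) y₂, d⟫ = ⟪(0 : EuclideanSpace ℝ (Fin dy)), d⟫ := by
          rw [hFO ν₂ hν₂]
        rwa [inner_add_left, real_inner_smul_left, inner_zero_left] at h0
      have hm : μ * ‖d‖ ^ 2 ≤ G₁ - G₂ := by
        have h0 := hγg_mono y₁ y₂
        rwa [inner_sub_left] at h0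
      have cs1 : |A₁| ≤ L₀ * ‖d‖ :=
        (abs_real_inner_le_norm _ _).trans
          (mul_le_mul_of_nonneg_right (hγf_bd y₁) (norm_nonneg d))
      have cs2 : |A₁ - A₂| ≤ L₁ * ‖d‖ ^ 2 := by
        have h0 : A₁ - A₂ = ⟪gradient (fun y' => f (mk2 x y')) y₁
            - gradient (fun y' => f (mk2 x y')) y₂, d⟫ := (inner_sub_left _ _ _).symm
        rw [h0]
        calc |⟪gradient (fun y' => f (mk2 x y')) y₁
              - gradient (fun y' => f (mk2 x y')) y₂, d⟫|
            ≤ ‖gradient (fun y' => f (mk2 x y')) y₁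
              - gradient (fun y' => f (mk2 x y')) y₂‖ * ‖d‖ := abs_real_inner_le_norm _ _
          _ ≤ (L₁ * ‖y₁ - y₂‖) * ‖d‖ :=
              mul_le_mul_of_nonneg_right (hγf_lip y₁ y₂) (norm_nonneg _)
          _ = L₁ * ‖d‖ ^ 2 := by rw [hd]; ring
      have hν₂L := (hνfacts ν₂ hν₂).1
      -- μ/2 ‖d‖² ≤ |Δν| L₀ ‖d‖
      have key : μ/2 * ‖d‖ ^ 2 ≤ |ν₁ - ν₂| * (L₀ * ‖d‖) := by
        have e1 : G₁ - G₂ = (ν₂ - ν₁) * A₁ + ν₂ * (A₂ - A₁) := by linear_combination s1 - s2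
        have p1 : ν₂ * (A₂ - A₁) ≤ μ/2 * ‖d‖ ^ 2 := by
          have q1 : ν₂ * (A₂ - A₁) ≤ ν₂ * |A₂ - A₁| :=
            mul_le_mul_of_nonneg_left (le_abs_self _) hν₂.1.le
          have q2 : |A₂ - A₁| = |A₁ - A₂| := abs_sub_comm _ _
          have q3 : ν₂ * |A₁ - A₂| ≤ ν₂ * (L₁ * ‖d‖ ^ 2) :=
            mul_le_mul_of_nonneg_left cs2 hν₂.1.le
          have q4 : ν₂ * L₁ * ‖d‖ ^ 2 ≤ μ/2 * ‖d‖ ^ 2 :=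
            mul_le_mul_of_nonneg_right hν₂L (sq_nonneg _)
          rw [q2] at q1
          nlinarith []
        have p2 : (ν₂ - ν₁) * A₁ ≤ |ν₁ - ν₂| * (L₀ * ‖d‖) := by
          calc (ν₂ - ν₁) * A₁ ≤ |(ν₂ - ν₁) * A₁| := le_abs_self _
            _ = |ν₂ - ν₁| * |A₁| := abs_mul _ _
            _ ≤ |ν₂ - ν₁| * (L₀ * ‖d‖) := mul_le_mul_of_nonneg_left cs1 (abs_nonneg _)
            _ = |ν₁ - ν₂| * (L₀ * ‖d‖) := by rw [abs_sub_comm]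
        linarith
      rcases eq_or_lt_of_le (norm_nonneg d) with h0 | h0
      · rw [← h0, mul_zero]; positivity
      · nlinarith [key, h0]
    -- bound on Hessian difference
    have hHd : ‖(ν₁ • Hyy f x (ystar ν₁) + Hyy g x (ystar ν₁))
        - (ν₂ • Hyy f x (ystar ν₂) + Hyy g x (ystar ν₂))‖ ≤ 4 * μ * κ^2 * |ν₁ - ν₂| := by
      have hsplit : (ν₁ • Hyy f x (ystar ν₁) + Hyy g x (ystar ν₁))
          - (ν₂ • Hyy f x (ystar ν₂) + Hyy g x (ystar ν₂))
          = (ν₁ - ν₂) • Hyy f x (ystar ν₁)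
            + (ν₂ • (Hyy f x (ystar ν₁) - Hyy f x (ystar ν₂))
              + (Hyy g x (ystar ν₁) - Hyy g x (ystar ν₂))) := by module
      have b1 : ‖(ν₁ - ν₂) • Hyy f x (ystar ν₁)‖ ≤ |ν₁ - ν₂| * L₁ := by
        refine (ContinuousLinearMap.opNorm_smul_le _ _).trans ?_
        rw [Real.norm_eq_abs]
        exact mul_le_mul_of_nonneg_left (hHf_bd _) (abs_nonneg _)
      have hyyf : ‖Hyy f x (ystar ν₁) - Hyy f x (ystar ν₂)‖ ≤ L₂ * ‖ystar ν₁ - ystar ν₂‖ := by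
        have h0 := hHf x (ystar ν₁) x (ystar ν₂)
        rwa [norm_mk2_sub] at h0
      have hyyg : ‖Hyy g x (ystar ν₁) - Hyy g x (ystar ν₂)‖ ≤ L₂ * ‖ystar ν₁ - ystar ν₂‖ := by
        have h0 := hHg x (ystar ν₁) x (ystar ν₂)
        rwa [norm_mk2_sub] at h0
      have b2 : ‖ν₂ • (Hyy f x (ystar ν₁) - Hyy f x (ystar ν₂))‖
          ≤ ν₂ * (L₂ * ‖ystar ν₁ - ystar ν₂‖) := by
        refine (ContinuousLinearMap.opNorm_smul_le _ _).trans ?_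
        rw [Real.norm_eq_abs, abs_of_pos hν₂.1]
        exact mul_le_mul_of_nonneg_left hyyf hν₂.1.le
      have htotal : ‖(ν₁ • Hyy f x (ystar ν₁) + Hyy g x (ystar ν₁))
          - (ν₂ • Hyy f x (ystar ν₂) + Hyy g x (ystar ν₂))‖
          ≤ |ν₁ - ν₂| * L₁ + (ν₂ * (L₂ * ‖ystar ν₁ - ystar ν₂‖)
            + L₂ * ‖ystar ν₁ - ystar ν₂‖) := by
        rw [hsplit]
        refine (norm_add_le _ _).trans (add_le_add b1 ?_)
        exact (norm_add_le _ _).trans (add_le_add b2 hyyg)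
      -- numeric bound
      have q0 : (0:ℝ) ≤ |ν₁ - ν₂| := abs_nonneg _
      have qy : (0:ℝ) ≤ ‖ystar ν₁ - ystar ν₂‖ := norm_nonneg _
      have hL1κ : L₁ ≤ κ * μ := hμκ ▸ hLf
      have hL0κ : L₀ ≤ κ * μ := hμκ ▸ hL0bar
      have hL2κ : L₂ ≤ κ * μ := hμκ ▸ hL2bar
      have hν₂half : ν₂ ≤ 1/2 := (hνfacts ν₂ hν₂).2
      have a1 : |ν₁ - ν₂| * L₁ ≤ κ^2 * μ * |ν₁ - ν₂| := by
        nlinarith [mul_le_mul_of_nonneg_left hL1κ q0,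
          mul_nonneg (mul_nonneg (mul_nonneg hκpos.le hμ.le) q0) (sub_nonneg.2 hκ1)]
      have w1 : L₂ * (μ * ‖ystar ν₁ - ystar ν₂‖) ≤ L₂ * (2 * L₀ * |ν₁ - ν₂|) :=
        mul_le_mul_of_nonneg_left hyd hL₂.le
      have w2 : L₂ * L₀ ≤ (κ*μ) * (κ*μ) :=
        mul_le_mul hL2κ hL0κ hL₀.le (by positivity)
      have w3 : μ * (L₂ * ‖ystar ν₁ - ystar ν₂‖) ≤ μ * (2 * κ^2 * μ * |ν₁ - ν₂|) := by
        nlinarith [w1, mul_le_mul_of_nonneg_right w2 q0]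
      have a2 : L₂ * ‖ystar ν₁ - ystar ν₂‖ ≤ 2 * κ^2 * μ * |ν₁ - ν₂| :=
        le_of_mul_le_mul_left w3 hμ
      have a3 : ν₂ * (L₂ * ‖ystar ν₁ - ystar ν₂‖) ≤ (1/2) * (2 * κ^2 * μ * |ν₁ - ν₂|) :=
        mul_le_mul hν₂half a2 (by positivity) (by norm_num)
      calc ‖(ν₁ • Hyy f x (ystar ν₁) + Hyy g x (ystar ν₁))
          - (ν₂ • Hyy f x (ystar ν₂) + Hyy g x (ystar ν₂))‖
          ≤ |ν₁ - ν₂| * L₁ + (ν₂ * (L₂ * ‖ystar ν₁ - ystar ν₂‖)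
            + L₂ * ‖ystar ν₁ - ystar ν₂‖) := htotal
        _ ≤ 4 * μ * κ^2 * |ν₁ - ν₂| := by linarith
    -- resolvent identity
    have hBdiff : (hchoice ν₁).choose - (hchoice ν₂).choose
        = ((hchoice ν₁).choose).comp
          ((((ν₂ • Hyy f x (ystar ν₂) + Hyy g x (ystar ν₂))
            - (ν₁ • Hyy f x (ystar ν₁) + Hyy g x (ystar ν₁)))).comp ((hchoice ν₂).choose)) := by
      have e1 : ((hchoice ν₁).choose).comp
          ((ν₂ • Hyy f x (ystar ν₂) + Hyy g x (ystar ν₂)).comp ((hchoice ν₂).choose))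
          = (hchoice ν₁).choose := by rw [hc2a, ContinuousLinearMap.comp_id]
      have e2 : ((hchoice ν₁).choose).comp
          ((ν₁ • Hyy f x (ystar ν₁) + Hyy g x (ystar ν₁)).comp ((hchoice ν₂).choose))
          = (hchoice ν₂).choose := by
        rw [← ContinuousLinearMap.comp_assoc, hc1b, ContinuousLinearMap.id_comp]
      calc (hchoice ν₁).choose - (hchoice ν₂).choose
          = ((hchoice ν₁).choose).comp
            ((ν₂ • Hyy f x (ystar ν₂) + Hyy g x (ystar ν₂)).comp ((hchoice ν₂).choose))
          - ((hchoice ν₁).choose).comp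
            ((ν₁ • Hyy f x (ystar ν₁) + Hyy g x (ystar ν₁)).comp ((hchoice ν₂).choose)) := by
            rw [e1, e2]
        _ = _ := by rw [← ContinuousLinearMap.comp_sub, ← ContinuousLinearMap.sub_comp]
    rw [hBdiff]
    have t0 : ‖(((ν₂ • Hyy f x (ystar ν₂) + Hyy g x (ystar ν₂))
        - (ν₁ • Hyy f x (ystar ν₁) + Hyy g x (ystar ν₁)))).comp ((hchoice ν₂).choose)‖
        ≤ (4 * μ * κ^2 * |ν₁ - ν₂|) * (2/μ) := by
      refine (ContinuousLinearMap.opNorm_comp_le _ _).trans ?_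
      refine mul_le_mul ?_ hc2n (norm_nonneg _) (by positivity)
      rw [norm_sub_rev]
      exact hHd
    have t1 : ‖((hchoice ν₁).choose).comp
        ((((ν₂ • Hyy f x (ystar ν₂) + Hyy g x (ystar ν₂))
          - (ν₁ • Hyy f x (ystar ν₁) + Hyy g x (ystar ν₁)))).comp ((hchoice ν₂).choose))‖
        ≤ (2/μ) * ((4 * μ * κ^2 * |ν₁ - ν₂|) * (2/μ)) := by
      refine (ContinuousLinearMap.opNorm_comp_le _ _).trans ?_
      exact mul_le_mul hc1n t0 (norm_nonneg _) (by positivity)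
    refine t1.trans (le_of_eq ?_)
    field_simp
    ring
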